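/- Let k1 ≥ l1 ≥ 0 and k2 ≥ l2 ≥ 0 be integers with n = k1+l1+k2+l2 ≥ 1, and set α = (k1−l1)/2 and β = (k2−l2)/2. Then the complex two-dimensional problem reduces to a weighted problem on the triangle: L(k1,l1,k2,l2) = D_{l1,l2}(α,β). -/

import Mathlib

/-- The supremum over the unit ball in `ℂ²` of the modulus of the difference between the
monomial `z₁^k₁ conj z₁^l₁ z₂^k₂ conj z₂^l₂` and `P(z₁, conj z₁, z₂, conj z₂)`. -/
noncomputable def ballSupDev (k1 l1 k2 l2 : ℕ) (P : MvPolynomial (Fin 4) ℂ) : ℝ :=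
  sSup ((fun z : ℂ × ℂ =>
      ‖z.1 ^ k1 * (starRingEnd ℂ z.1) ^ l1 * z.2 ^ k2 * (starRingEnd ℂ z.2) ^ l2
        - MvPolynomial.eval ![z.1, starRingEnd ℂ z.1, z.2, starRingEnd ℂ z.2] P‖) ''
    {z : ℂ × ℂ | ‖z.1‖ ^ 2 + ‖z.2‖ ^ 2 ≤ 1})

/-- The minimal deviation `L(k₁,l₁,k₂,l₂)`: infimum over polynomials `P` in four commuting
complex variables of total degree at most `n - 1` (where `n = k₁+l₁+k₂+l₂`) of the sup norm on
the ball of `z₁^k₁ conj z₁^l₁ z₂^k₂ conj z₂^l₂ - P(z₁, conj z₁, z₂, conj z₂)`. -/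
noncomputable def devL (k1 l1 k2 l2 : ℕ) : ℝ :=
  sInf {r : ℝ | ∃ P : MvPolynomial (Fin 4) ℂ,
    P.totalDegree ≤ k1 + l1 + k2 + l2 - 1 ∧ r = ballSupDev k1 l1 k2 l2 P}
/-- The standard triangle `Δ = {(t₁,t₂) : t₁ ≥ 0, t₂ ≥ 0, t₁ + t₂ ≤ 1}`. -/
def triangle : Set (ℝ × ℝ) := {t : ℝ × ℝ | 0 ≤ t.1 ∧ 0 ≤ t.2 ∧ t.1 + t.2 ≤ 1}

/-- The weighted sup norm on the triangle: `sup_{(t₁,t₂) ∈ Δ} t₁^α t₂^β |Q(t₁,t₂)|`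
(real `rpow`, so `0^0 = 1`). -/
noncomputable def triangleSup (a b : ℝ) (Q : MvPolynomial (Fin 2) ℝ) : ℝ :=
  sSup ((fun t : ℝ × ℝ => t.1 ^ a * t.2 ^ b * |MvPolynomial.eval ![t.1, t.2] Q|) '' triangle)

/-- `Q` has coefficient `1` on the monomial `t₁^{l₁} t₂^{l₂}` and all its other monomials have
total degree at most `l₁ + l₂ - 1`. -/
def IsDevDCandidate (l1 l2 : ℕ) (Q : MvPolynomial (Fin 2) ℝ) : Prop :=
  Q.coeff (Finsupp.single (0 : Fin 2) l1 + Finsupp.single (1 : Fin 2) l2) = 1 ∧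
  ∀ d ∈ Q.support, d ≠ Finsupp.single (0 : Fin 2) l1 + Finsupp.single (1 : Fin 2) l2 →
    (d.sum fun _ e => e) ≤ l1 + l2 - 1

/-- `D_{l₁,l₂}(α,β)`: infimum over such `Q` of the weighted sup norm on the triangle. -/
noncomputable def devD (l1 l2 : ℕ) (a b : ℝ) : ℝ :=
  sInf {r : ℝ | ∃ Q : MvPolynomial (Fin 2) ℝ, IsDevDCandidate l1 l2 Q ∧ r = triangleSup a b Q}


open Complex Finset MvPolynomial

namespace LeastDevAux

open Complex Finset MvPolynomial

/-- the exponent `t1^a t2^b` as a `Finsupp` on `Fin 2`. -/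
noncomputable def sp (a b : ℕ) : Fin 2 →₀ ℕ := Finsupp.single 0 a + Finsupp.single 1 b

/-- the exponent `z1^(p+a) z̄1^a z2^(q+b) z̄2^b` as a `Finsupp` on `Fin 4`. -/
noncomputable def e4 (p q a b : ℕ) : Fin 4 →₀ ℕ :=
  Finsupp.single 0 (p + a) + Finsupp.single 1 a + Finsupp.single 2 (q + b) + Finsupp.single 3 b

lemma sp_apply0 (a b : ℕ) : sp a b 0 = a := by simp [sp]
lemma sp_apply1 (a b : ℕ) : sp a b 1 = b := by simp [sp]

lemma sp_inj {a b c d : ℕ} (h : sp a b = sp c d) : a = c ∧ b = d := by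
  constructor
  · have := DFunLike.congr_fun h (0 : Fin 2); simpa [sp] using this
  · have := DFunLike.congr_fun h (1 : Fin 2); simpa [sp] using this

lemma prod2 {M : Type*} [CommMonoid M] (f : Fin 2 → M) (a b : ℕ) :
    (sp a b).prod (fun i e => f i ^ e) = f 0 ^ a * f 1 ^ b := by
  rw [Finsupp.prod_fintype _ _ (fun _ => pow_zero _), Fin.prod_univ_two, sp_apply0, sp_apply1]

lemma e4_apply0 (p q a b : ℕ) : e4 p q a b 0 = p + a := by simp [e4]
lemma e4_apply1 (p q a b : ℕ) : e4 p q a b 1 = a := by simp [e4]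
lemma e4_apply2 (p q a b : ℕ) : e4 p q a b 2 = q + b := by simp [e4]
lemma e4_apply3 (p q a b : ℕ) : e4 p q a b 3 = b := by simp [e4]

lemma prod4 {M : Type*} [CommMonoid M] (f : Fin 4 → M) (p q a b : ℕ) :
    (e4 p q a b).prod (fun i e => f i ^ e) = f 0 ^ (p + a) * f 1 ^ a * f 2 ^ (q + b) * f 3 ^ b := by
  rw [Finsupp.prod_fintype _ _ (fun _ => pow_zero _), Fin.prod_univ_four, e4_apply0, e4_apply1,
    e4_apply2, e4_apply3]

lemma fsum2 (d : Fin 2 →₀ ℕ) : (d.sum fun _ e => e) = d 0 + d 1 := by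
  rw [Finsupp.sum_fintype _ _ (fun _ => rfl), Fin.sum_univ_two]

lemma fsum4 (d : Fin 4 →₀ ℕ) : (d.sum fun _ e => e) = d 0 + d 1 + d 2 + d 3 := by
  rw [Finsupp.sum_fintype _ _ (fun _ => rfl), Fin.sum_univ_four]

lemma sp_sum (a b : ℕ) : ((sp a b).sum fun _ e => e) = a + b := by
  rw [fsum2, sp_apply0, sp_apply1]

lemma e4_sum (p q a b : ℕ) : ((e4 p q a b).sum fun _ e => e) = (p + a) + a + (q + b) + b := by
  rw [fsum4, e4_apply0, e4_apply1, e4_apply2, e4_apply3]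

lemma eval4 (v : Fin 4 → ℂ) (P : MvPolynomial (Fin 4) ℂ) :
    eval v P = ∑ d ∈ P.support, P.coeff d * (v 0 ^ d 0 * v 1 ^ d 1 * v 2 ^ d 2 * v 3 ^ d 3) := by
  rw [eval_eq']
  exact Finset.sum_congr rfl fun d _ => by rw [Fin.prod_univ_four]

lemma eval2 (v : Fin 2 → ℝ) (Q : MvPolynomial (Fin 2) ℝ) :
    eval v Q = ∑ d ∈ Q.support, Q.coeff d * (v 0 ^ d 0 * v 1 ^ d 1) := by
  rw [eval_eq']
  exact Finset.sum_congr rfl fun d _ => by rw [Fin.prod_univ_two]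

lemma totalDegree_monomial_le {σ : Type*} (s : σ →₀ ℕ) (c : ℂ) :
    ((monomial s) c).totalDegree ≤ s.sum fun _ e => e := by
  by_cases hc : c = 0
  · simp [hc]
  · rw [totalDegree_monomial s hc]

/-- weight helper: `t ^ (m/2) = (√t)^m` for `t ≥ 0`. -/
lemma weight_eq {t : ℝ} (ht : 0 ≤ t) (m : ℕ) :
    t ^ ((m : ℝ) / 2) = Real.sqrt t ^ m := by
  rw [show ((m : ℝ) / 2) = (1 / 2) * m by ring, Real.rpow_mul ht, ← Real.sqrt_eq_rpow,
    ← Real.rpow_natCast (Real.sqrt t) m]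

/-- root-of-unity averaging lemma. -/
lemma rootSum {N : ℕ} {ζ : ℂ} (hprim : IsPrimitiveRoot ζ N) (m : ℤ) (hm : m.natAbs < N) :
    ∑ a ∈ Finset.range N, ζ ^ ((a : ℤ) * m)
      = if m = 0 then (N : ℂ) else 0 := by
  by_cases hm0 : m = 0
  · simp [hm0]
  · rw [if_neg hm0]
    have hx1 : ζ ^ m ≠ 1 := by
      intro h
      rw [hprim.zpow_eq_one_iff_dvd] at h
      have hN' : N ∣ m.natAbs := by simpa using Int.natAbs_dvd_natAbs.mpr h
      have : N ≤ m.natAbs := Nat.le_of_dvd (Int.natAbs_pos.mpr hm0) hN'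
      omega
    have hterm : ∀ a : ℕ, ζ ^ ((a : ℤ) * m) = (ζ ^ m) ^ a := by
      intro a
      rw [mul_comm, zpow_mul, zpow_natCast]
    calc ∑ a ∈ Finset.range N, ζ ^ ((a : ℤ) * m)
        = ∑ a ∈ Finset.range N, (ζ ^ m) ^ a := Finset.sum_congr rfl fun a _ => hterm a
      _ = ((ζ ^ m) ^ N - 1) / (ζ ^ m - 1) := geom_sum_eq hx1 N
      _ = 0 := by
          have : (ζ ^ m) ^ N = 1 := by
            rw [← zpow_natCast (ζ ^ m) N, ← zpow_mul, mul_comm, zpow_mul, zpow_natCast,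
              hprim.pow_eq_one, one_zpow]
          rw [this, sub_self, zero_div]



lemma ball_abs_le {z : ℂ × ℂ} (hz : ‖z.1‖ ^ 2 + ‖z.2‖ ^ 2 ≤ 1) :
    ‖z.1‖ ≤ 1 ∧ ‖z.2‖ ≤ 1 := by
  constructor <;> nlinarith [norm_nonneg z.1, norm_nonneg z.2]

lemma ballFun_le (k1 l1 k2 l2 : ℕ) (P : MvPolynomial (Fin 4) ℂ) {z : ℂ × ℂ}
    (hz : ‖z.1‖ ^ 2 + ‖z.2‖ ^ 2 ≤ 1) :
    ‖z.1 ^ k1 * (starRingEnd ℂ z.1) ^ l1 * z.2 ^ k2 * (starRingEnd ℂ z.2) ^ l2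
        - MvPolynomial.eval ![z.1, starRingEnd ℂ z.1, z.2, starRingEnd ℂ z.2] P‖
      ≤ 1 + ∑ d ∈ P.support, ‖P.coeff d‖ := by
  obtain ⟨hz1, hz2⟩ := ball_abs_le hz
  set v : Fin 4 → ℂ := ![z.1, starRingEnd ℂ z.1, z.2, starRingEnd ℂ z.2] with hv
  have habs : ∀ i, ‖v i‖ ≤ 1 := by
    intro i; fin_cases i <;> simp [hv, Complex.norm_conj] <;> assumption
  have hA : ‖z.1 ^ k1 * (starRingEnd ℂ z.1) ^ l1 * z.2 ^ k2
      * (starRingEnd ℂ z.2) ^ l2‖ ≤ 1 := by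
    have : ‖z.1 ^ k1 * (starRingEnd ℂ z.1) ^ l1 * z.2 ^ k2
        * (starRingEnd ℂ z.2) ^ l2‖
        = ‖z.1‖ ^ k1 * ‖z.1‖ ^ l1 * ‖z.2‖ ^ k2
          * ‖z.2‖ ^ l2 := by
      simp [map_mul, map_pow, Complex.norm_conj]
    rw [this]
    calc ‖z.1‖ ^ k1 * ‖z.1‖ ^ l1 * ‖z.2‖ ^ k2
          * ‖z.2‖ ^ l2 ≤ 1 * 1 * 1 * 1 := by
          gcongr <;>
            first
              | exact pow_le_one₀ (norm_nonneg _) hz1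
              | exact pow_le_one₀ (norm_nonneg _) hz2
      _ = 1 := by norm_num
  have hB : ‖MvPolynomial.eval v P‖ ≤ ∑ d ∈ P.support, ‖P.coeff d‖ := by
    rw [eval4]
    refine le_trans (norm_sum_le _ _) (Finset.sum_le_sum fun d _ => ?_)
    rw [norm_mul]
    have hprod : ‖v 0 ^ d 0 * v 1 ^ d 1 * v 2 ^ d 2 * v 3 ^ d 3‖ ≤ 1 := by
      simp only [norm_mul, norm_pow]
      calc ‖v 0‖ ^ d 0 * ‖v 1‖ ^ d 1 * ‖v 2‖ ^ d 2
            * ‖v 3‖ ^ d 3 ≤ 1 * 1 * 1 * 1 := by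
            gcongr <;> exact pow_le_one₀ (norm_nonneg _) (habs _)
        _ = 1 := by norm_num
    calc ‖P.coeff d‖ * ‖v 0 ^ d 0 * v 1 ^ d 1 * v 2 ^ d 2 * v 3 ^ d 3‖
        ≤ ‖P.coeff d‖ * 1 := mul_le_mul_of_nonneg_left hprod (norm_nonneg _)
      _ = ‖P.coeff d‖ := mul_one _
  calc ‖_ - MvPolynomial.eval v P‖ ≤ ‖_‖ + ‖MvPolynomial.eval v P‖ := by
        simpa using
          norm_sub_le (z.1 ^ k1 * (starRingEnd ℂ z.1) ^ l1 * z.2 ^ k2 * (starRingEnd ℂ z.2) ^ l2)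
            (MvPolynomial.eval v P)
    _ ≤ 1 + ∑ d ∈ P.support, ‖P.coeff d‖ := add_le_add hA hB

lemma bddAbove_ball (k1 l1 k2 l2 : ℕ) (P : MvPolynomial (Fin 4) ℂ) :
    BddAbove ((fun z : ℂ × ℂ =>
      ‖z.1 ^ k1 * (starRingEnd ℂ z.1) ^ l1 * z.2 ^ k2 * (starRingEnd ℂ z.2) ^ l2
        - MvPolynomial.eval ![z.1, starRingEnd ℂ z.1, z.2, starRingEnd ℂ z.2] P‖) ''
    {z : ℂ × ℂ | ‖z.1‖ ^ 2 + ‖z.2‖ ^ 2 ≤ 1}) := by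
  refine ⟨1 + ∑ d ∈ P.support, ‖P.coeff d‖, ?_⟩
  rintro x ⟨z, hz, rfl⟩
  exact ballFun_le k1 l1 k2 l2 P hz

lemma le_ballSupDev (k1 l1 k2 l2 : ℕ) (P : MvPolynomial (Fin 4) ℂ) {z : ℂ × ℂ}
    (hz : ‖z.1‖ ^ 2 + ‖z.2‖ ^ 2 ≤ 1) :
    ‖z.1 ^ k1 * (starRingEnd ℂ z.1) ^ l1 * z.2 ^ k2 * (starRingEnd ℂ z.2) ^ l2
        - MvPolynomial.eval ![z.1, starRingEnd ℂ z.1, z.2, starRingEnd ℂ z.2] P‖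
      ≤ ballSupDev k1 l1 k2 l2 P :=
  le_csSup (bddAbove_ball k1 l1 k2 l2 P) (Set.mem_image_of_mem _ hz)

lemma ballSupDev_nonneg (k1 l1 k2 l2 : ℕ) (P : MvPolynomial (Fin 4) ℂ) :
    0 ≤ ballSupDev k1 l1 k2 l2 P := by
  have h0 : ((0 : ℂ), (0 : ℂ)) ∈ {z : ℂ × ℂ | ‖z.1‖ ^ 2 + ‖z.2‖ ^ 2 ≤ 1} := by
    simp
  exact le_trans (norm_nonneg _) (le_ballSupDev k1 l1 k2 l2 P h0)

lemma triFun_le (a b : ℝ) (ha : 0 ≤ a) (hb : 0 ≤ b) (Q : MvPolynomial (Fin 2) ℝ) {t : ℝ × ℝ}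
    (ht : t ∈ triangle) :
    t.1 ^ a * t.2 ^ b * |MvPolynomial.eval ![t.1, t.2] Q| ≤ ∑ d ∈ Q.support, |Q.coeff d| := by
  obtain ⟨ht1, ht2, hts⟩ := ht
  have h1le : t.1 ≤ 1 := by linarith
  have h2le : t.2 ≤ 1 := by linarith
  have hE : |MvPolynomial.eval ![t.1, t.2] Q| ≤ ∑ d ∈ Q.support, |Q.coeff d| := by
    rw [eval2]
    refine le_trans (Finset.abs_sum_le_sum_abs _ _) (Finset.sum_le_sum fun d _ => ?_)
    rw [abs_mul]
    have hv0 : (![t.1, t.2] : Fin 2 → ℝ) 0 = t.1 := rfl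
    have hv1 : (![t.1, t.2] : Fin 2 → ℝ) 1 = t.2 := rfl
    rw [hv0, hv1]
    have hp : |t.1 ^ d 0 * t.2 ^ d 1| ≤ 1 := by
      rw [_root_.abs_of_nonneg (by positivity)]
      calc t.1 ^ d 0 * t.2 ^ d 1 ≤ 1 * 1 := by
            gcongr <;> first | exact pow_le_one₀ ht1 h1le | exact pow_le_one₀ ht2 h2le
        _ = 1 := by norm_num
    calc |Q.coeff d| * |t.1 ^ d 0 * t.2 ^ d 1| ≤ |Q.coeff d| * 1 :=
          mul_le_mul_of_nonneg_left hp (abs_nonneg _)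
      _ = |Q.coeff d| := mul_one _
  calc t.1 ^ a * t.2 ^ b * |MvPolynomial.eval ![t.1, t.2] Q|
      ≤ 1 * 1 * (∑ d ∈ Q.support, |Q.coeff d|) := by
        gcongr <;>
          first
            | exact Real.rpow_nonneg ht1 _
            | exact Real.rpow_nonneg ht2 _
            | exact _root_.abs_nonneg _
            | exact Real.rpow_le_one ht1 h1le ha
            | exact Real.rpow_le_one ht2 h2le hb
            | exact le_refl _
    _ = ∑ d ∈ Q.support, |Q.coeff d| := by rw [one_mul, one_mul]

lemma bddAbove_tri (a b : ℝ) (ha : 0 ≤ a) (hb : 0 ≤ b) (Q : MvPolynomial (Fin 2) ℝ) :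
    BddAbove ((fun t : ℝ × ℝ => t.1 ^ a * t.2 ^ b * |MvPolynomial.eval ![t.1, t.2] Q|)
      '' triangle) := by
  refine ⟨∑ d ∈ Q.support, |Q.coeff d|, ?_⟩
  rintro x ⟨t, ht, rfl⟩
  exact triFun_le a b ha hb Q ht

lemma le_triangleSup (a b : ℝ) (ha : 0 ≤ a) (hb : 0 ≤ b) (Q : MvPolynomial (Fin 2) ℝ)
    {t : ℝ × ℝ} (ht : t ∈ triangle) :
    t.1 ^ a * t.2 ^ b * |MvPolynomial.eval ![t.1, t.2] Q| ≤ triangleSup a b Q :=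
  le_csSup (bddAbove_tri a b ha hb Q) (Set.mem_image_of_mem _ ht)

lemma triangleSup_nonneg (a b : ℝ) (ha : 0 ≤ a) (hb : 0 ≤ b) (Q : MvPolynomial (Fin 2) ℝ) :
    0 ≤ triangleSup a b Q := by
  have h0 : ((0 : ℝ), (0 : ℝ)) ∈ triangle := by
    constructor
    · exact le_refl 0
    · constructor
      · exact le_refl 0
      · norm_num
  exact le_trans (by positivity) (le_triangleSup a b ha hb Q h0)


lemma mono_id (z1 z2 : ℂ) (p q a b : ℕ) :
    z1 ^ (p + a) * (starRingEnd ℂ z1) ^ a * z2 ^ (q + b) * (starRingEnd ℂ z2) ^ b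
      = z1 ^ p * z2 ^ q
        * (((‖z1‖ ^ 2) ^ a * (‖z2‖ ^ 2) ^ b : ℝ) : ℂ) := by
  have hc1 : z1 * starRingEnd ℂ z1 = ((‖z1‖ ^ 2 : ℝ) : ℂ) := by
    rw [mul_conj, ← Complex.sq_norm]
  have hc2 : z2 * starRingEnd ℂ z2 = ((‖z2‖ ^ 2 : ℝ) : ℂ) := by
    rw [mul_conj, ← Complex.sq_norm]
  calc z1 ^ (p + a) * (starRingEnd ℂ z1) ^ a * z2 ^ (q + b) * (starRingEnd ℂ z2) ^ b
      = z1 ^ p * z2 ^ q * ((z1 * starRingEnd ℂ z1) ^ a * (z2 * starRingEnd ℂ z2) ^ b) := by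
        rw [pow_add, pow_add]; ring
    _ = _ := by rw [hc1, hc2]; push_cast; ring

lemma dirA (k1 l1 k2 l2 : ℕ) (h1 : l1 ≤ k1) (h2 : l2 ≤ k2)
    (Q : MvPolynomial (Fin 2) ℝ) (hQ : IsDevDCandidate l1 l2 Q) :
    ∃ P : MvPolynomial (Fin 4) ℂ, P.totalDegree ≤ k1 + l1 + k2 + l2 - 1 ∧
      ballSupDev k1 l1 k2 l2 P
        = triangleSup (((k1 : ℝ) - l1) / 2) (((k2 : ℝ) - l2) / 2) Q := by
  set p := k1 - l1 with hpdef
  set q := k2 - l2 with hqdef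
  have hp' : p + l1 = k1 := Nat.sub_add_cancel h1
  have hq' : q + l2 = k2 := Nat.sub_add_cancel h2
  set R := Q - monomial (sp l1 l2) 1 with hR
  have hQco : Q.coeff (sp l1 l2) = 1 := hQ.1
  have hRs : ∀ d ∈ R.support, d ≠ sp l1 l2 ∧ d 0 + d 1 + 1 ≤ l1 + l2 := by
    intro d hd
    have hc : R.coeff d ≠ 0 := (MvPolynomial.mem_support_iff).mp hd
    have hco : R.coeff d = Q.coeff d - (if sp l1 l2 = d then 1 else 0) := by
      rw [hR, coeff_sub, coeff_monomial]
    have hne : d ≠ sp l1 l2 := by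
      rintro rfl
      rw [hco, if_pos rfl, hQco] at hc
      simp at hc
    have hQs : d ∈ Q.support := by
      rw [MvPolynomial.mem_support_iff]
      rw [hco, if_neg (fun h => hne h.symm), sub_zero] at hc
      exact hc
    have hdeg : d 0 + d 1 ≤ l1 + l2 - 1 := by
      have := hQ.2 d hQs hne
      rwa [fsum2] at this
    refine ⟨hne, ?_⟩
    by_cases h0 : l1 + l2 = 0
    · exfalso
      apply hne
      have hl1 : l1 = 0 := by omega
      have hl2 : l2 = 0 := by omega
      have hd0 : d 0 = 0 := by omega
      have hd1 : d 1 = 0 := by omega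
      ext i
      fin_cases i <;> simp [sp, hl1, hl2] <;> assumption
    · omega
  set P : MvPolynomial (Fin 4) ℂ :=
    ∑ d ∈ R.support, monomial (e4 p q (d 0) (d 1)) (-((R.coeff d : ℝ) : ℂ)) with hP
  refine ⟨P, ?_, ?_⟩
  · refine le_trans (totalDegree_finset_sum _ _) (Finset.sup_le fun d hd => ?_)
    refine le_trans (totalDegree_monomial_le _ _) ?_
    rw [e4_sum]
    have := (hRs d hd).2
    omega
  · have hQeval : ∀ t1 t2 : ℝ,
        MvPolynomial.eval ![t1, t2] Q
          = t1 ^ l1 * t2 ^ l2 + ∑ d ∈ R.support, R.coeff d * (t1 ^ d 0 * t2 ^ d 1) := by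
      intro t1 t2
      have hQsplit : Q = monomial (sp l1 l2) 1 + R := by rw [hR]; ring
      rw [hQsplit, map_add, eval_monomial, prod2]
      rw [eval2]
      simp only [Matrix.cons_val_zero, Matrix.cons_val_one, Matrix.head_cons, one_mul]
    have key : ∀ z : ℂ × ℂ,
        ‖z.1 ^ k1 * (starRingEnd ℂ z.1) ^ l1 * z.2 ^ k2 * (starRingEnd ℂ z.2) ^ l2
          - MvPolynomial.eval ![z.1, starRingEnd ℂ z.1, z.2, starRingEnd ℂ z.2] P‖
        = (‖z.1‖ ^ 2) ^ (((k1 : ℝ) - l1) / 2)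
          * (‖z.2‖ ^ 2) ^ (((k2 : ℝ) - l2) / 2)
          * |MvPolynomial.eval ![‖z.1‖ ^ 2, ‖z.2‖ ^ 2] Q| := by
      intro z
      set t1 : ℝ := ‖z.1‖ ^ 2 with ht1
      set t2 : ℝ := ‖z.2‖ ^ 2 with ht2
      have ht1n : (0 : ℝ) ≤ t1 := by positivity
      have ht2n : (0 : ℝ) ≤ t2 := by positivity
      set v : Fin 4 → ℂ := ![z.1, starRingEnd ℂ z.1, z.2, starRingEnd ℂ z.2] with hv
      have hvP : MvPolynomial.eval v P
          = ∑ d ∈ R.support, (-((R.coeff d : ℝ) : ℂ))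
              * (z.1 ^ p * z.2 ^ q * ((t1 ^ d 0 * t2 ^ d 1 : ℝ) : ℂ)) := by
        rw [hP, map_sum]
        refine Finset.sum_congr rfl fun d _ => ?_
        rw [eval_monomial, prod4]
        have h0 : v 0 = z.1 := rfl
        have h1' : v 1 = starRingEnd ℂ z.1 := rfl
        have h2' : v 2 = z.2 := rfl
        have h3 : v 3 = starRingEnd ℂ z.2 := rfl
        rw [h0, h1', h2', h3, mono_id z.1 z.2 p q (d 0) (d 1)]
      have hM : z.1 ^ k1 * (starRingEnd ℂ z.1) ^ l1 * z.2 ^ k2 * (starRingEnd ℂ z.2) ^ l2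
          = z.1 ^ p * z.2 ^ q * ((t1 ^ l1 * t2 ^ l2 : ℝ) : ℂ) := by
        rw [← hp', ← hq']
        exact mono_id z.1 z.2 p q l1 l2
      have hdiff : z.1 ^ k1 * (starRingEnd ℂ z.1) ^ l1 * z.2 ^ k2 * (starRingEnd ℂ z.2) ^ l2
          - MvPolynomial.eval v P
          = z.1 ^ p * z.2 ^ q * ((MvPolynomial.eval ![t1, t2] Q : ℝ) : ℂ) := by
        rw [hM, hvP, hQeval t1 t2]
        push_cast
        rw [mul_add, Finset.mul_sum, sub_eq_add_neg, ← Finset.sum_neg_distrib]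
        exact congrArg₂ (· + ·) rfl (Finset.sum_congr rfl fun d _ => by ring)
      rw [hdiff, norm_mul, norm_mul, norm_pow, norm_pow, Complex.norm_real, Real.norm_eq_abs]
      have hw1 : t1 ^ (((k1 : ℝ) - l1) / 2) = ‖z.1‖ ^ p := by
        have hcast : ((k1 : ℝ) - l1) / 2 = ((p : ℕ) : ℝ) / 2 := by
          rw [hpdef]; push_cast [Nat.cast_sub h1]; ring
        rw [hcast, weight_eq ht1n, ht1, Real.sqrt_sq (norm_nonneg z.1)]
      have hw2 : t2 ^ (((k2 : ℝ) - l2) / 2) = ‖z.2‖ ^ q := by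
        have hcast : ((k2 : ℝ) - l2) / 2 = ((q : ℕ) : ℝ) / 2 := by
          rw [hqdef]; push_cast [Nat.cast_sub h2]; ring
        rw [hcast, weight_eq ht2n, ht2, Real.sqrt_sq (norm_nonneg z.2)]
      rw [← hw1, ← hw2]
    unfold ballSupDev triangleSup
    congr 1
    apply Set.Subset.antisymm
    · rintro x ⟨z, hz, rfl⟩
      refine ⟨(‖z.1‖ ^ 2, ‖z.2‖ ^ 2), ⟨by positivity, by positivity, hz⟩, ?_⟩
      exact (key z).symm
    · rintro x ⟨t, ht, rfl⟩
      obtain ⟨ht1, ht2, hts⟩ := ht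
      have hs1 : ‖((Real.sqrt t.1 : ℝ) : ℂ)‖ ^ 2 = t.1 := by
        rw [Complex.norm_real, Real.norm_eq_abs, _root_.abs_of_nonneg (Real.sqrt_nonneg _), Real.sq_sqrt ht1]
      have hs2 : ‖((Real.sqrt t.2 : ℝ) : ℂ)‖ ^ 2 = t.2 := by
        rw [Complex.norm_real, Real.norm_eq_abs, _root_.abs_of_nonneg (Real.sqrt_nonneg _), Real.sq_sqrt ht2]
      refine ⟨(((Real.sqrt t.1 : ℝ) : ℂ), ((Real.sqrt t.2 : ℝ) : ℂ)), ?_, ?_⟩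
      · show ‖_‖ ^ 2 + ‖_‖ ^ 2 ≤ 1
        rw [hs1, hs2]; exact hts
      · exact (key (((Real.sqrt t.1 : ℝ) : ℂ), ((Real.sqrt t.2 : ℝ) : ℂ))).trans
          (by rw [hs1, hs2])

lemma conj_unit {ζ : ℂ} (hu : ‖ζ‖ = 1) : starRingEnd ℂ ζ = ζ⁻¹ := by
  have h : ζ * starRingEnd ℂ ζ = 1 := by
    rw [mul_conj, ← Complex.sq_norm, hu]; norm_num
  exact eq_inv_of_mul_eq_one_right h

lemma rot_pow {ζ : ℂ} (hu : ‖ζ‖ = 1) (w : ℝ) (a c d : ℕ) :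
    (ζ ^ a * (w : ℂ)) ^ c * (starRingEnd ℂ (ζ ^ a * (w : ℂ))) ^ d
      = ζ ^ ((a : ℤ) * ((c : ℤ) - (d : ℤ))) * ((w ^ (c + d) : ℝ) : ℂ) := by
  have hζ0 : ζ ≠ 0 := by intro h; rw [h] at hu; simp at hu
  have hconj : starRingEnd ℂ (ζ ^ a * (w : ℂ)) = (ζ ^ a)⁻¹ * w := by
    rw [map_mul, map_pow, conj_unit hu, Complex.conj_ofReal, inv_pow]
  have key : ζ ^ (a * c) * (ζ ^ (a * d))⁻¹ = ζ ^ ((a : ℤ) * ((c : ℤ) - (d : ℤ))) := by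
    rw [← zpow_natCast ζ (a * c), ← zpow_natCast ζ (a * d), ← zpow_neg, ← zpow_add₀ hζ0]
    congr 1
    push_cast
    ring
  calc (ζ ^ a * (w : ℂ)) ^ c * (starRingEnd ℂ (ζ ^ a * (w : ℂ))) ^ d
      = (ζ ^ (a * c) * (ζ ^ (a * d))⁻¹) * ((w : ℂ) ^ c * (w : ℂ) ^ d) := by
        rw [hconj, mul_pow, mul_pow, inv_pow, ← pow_mul, ← pow_mul]
        ring
    _ = ζ ^ ((a : ℤ) * ((c : ℤ) - (d : ℤ))) * ((w ^ (c + d) : ℝ) : ℂ) := by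
        rw [key, ← pow_add]
        push_cast
        ring

lemma zpow_collect {ζ : ℂ} (hζ0 : ζ ≠ 0) {x y z : ℤ} (h : x + y = z) (c W : ℂ) :
    ζ ^ x * (c * (ζ ^ y * W)) = c * W * ζ ^ z := by
  rw [← h, zpow_add₀ hζ0]; ring

lemma zpow_cancel {ζ : ℂ} (hζ0 : ζ ≠ 0) {x y : ℤ} (h : x + y = 0) (W : ℂ) :
    ζ ^ x * (ζ ^ y * W) = W := by
  rw [← mul_assoc, ← zpow_add₀ hζ0, h, zpow_zero, one_mul]

lemma dirB (k1 l1 k2 l2 : ℕ) (h1 : l1 ≤ k1) (h2 : l2 ≤ k2) (hn : 1 ≤ k1 + l1 + k2 + l2)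
    (P : MvPolynomial (Fin 4) ℂ) (hP : P.totalDegree ≤ k1 + l1 + k2 + l2 - 1) :
    ∃ Q : MvPolynomial (Fin 2) ℝ, IsDevDCandidate l1 l2 Q ∧
      triangleSup (((k1 : ℝ) - l1) / 2) (((k2 : ℝ) - l2) / 2) Q
        ≤ ballSupDev k1 l1 k2 l2 P := by
  set n := k1 + l1 + k2 + l2 with hn'
  set p := k1 - l1 with hpdef
  set q := k2 - l2 with hqdef
  have hp' : p + l1 = k1 := Nat.sub_add_cancel h1
  have hq' : q + l2 = k2 := Nat.sub_add_cancel h2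
  have hsupdeg : ∀ d ∈ P.support, d 0 + d 1 + d 2 + d 3 ≤ n - 1 := by
    intro d hd
    have h := MvPolynomial.le_totalDegree hd
    rw [fsum4] at h
    exact le_trans h hP
  set T := P.support.filter (fun d => d 0 = d 1 + p ∧ d 2 = d 3 + q) with hT
  set Q := monomial (sp l1 l2) (1 : ℝ)
    - ∑ d ∈ T, monomial (sp (d 1) (d 3)) ((P.coeff d).re) with hQ
  have hTd : ∀ d ∈ T, d 1 + d 3 + 1 ≤ l1 + l2 ∧ d 0 = d 1 + p ∧ d 2 = d 3 + q ∧
      d ∈ P.support := by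
    intro d hd
    rw [hT, Finset.mem_filter] at hd
    obtain ⟨hds, hd0, hd2⟩ := hd
    have := hsupdeg d hds
    refine ⟨by omega, hd0, hd2, hds⟩
  have hQcoeff : ∀ e, Q.coeff e = (if sp l1 l2 = e then 1 else 0)
      - ∑ d ∈ T, (if sp (d 1) (d 3) = e then (P.coeff d).re else 0) := by
    intro e
    rw [hQ, coeff_sub, coeff_monomial, MvPolynomial.coeff_sum]
    congr 1
    exact Finset.sum_congr rfl fun d _ => coeff_monomial _ _ _
  have hcand : IsDevDCandidate l1 l2 Q := by
    constructor
    · show Q.coeff (sp l1 l2) = 1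
      rw [hQcoeff, if_pos rfl]
      have hz : ∀ d ∈ T, (if sp (d 1) (d 3) = sp l1 l2 then (P.coeff d).re else 0) = 0 := by
        intro d hd
        rw [if_neg]
        intro h
        obtain ⟨e1, e3⟩ := sp_inj h
        have := (hTd d hd).1
        omega
      rw [Finset.sum_congr rfl hz, Finset.sum_const_zero, sub_zero]
    · intro e he hne
      have hce : Q.coeff e ≠ 0 := (MvPolynomial.mem_support_iff).mp he
      rw [hQcoeff, if_neg (fun h => hne h.symm), zero_sub, neg_ne_zero] at hce
      obtain ⟨d, hd, hdne⟩ := Finset.exists_ne_zero_of_sum_ne_zero hce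
      have heq : sp (d 1) (d 3) = e := by
        by_contra h; rw [if_neg h] at hdne; exact hdne rfl
      rw [fsum2, ← heq, sp_apply0, sp_apply1]
      have := (hTd d hd).1
      omega
  refine ⟨Q, hcand, ?_⟩
  refine Real.sSup_le ?_ (ballSupDev_nonneg k1 l1 k2 l2 P)
  rintro x ⟨t, ht, rfl⟩
  obtain ⟨ht1, ht2, hts⟩ := ht
  set r := ballSupDev k1 l1 k2 l2 P with hrdef
  set N := 2 * n with hN
  have hN0 : N ≠ 0 := by omega
  set ζ := Complex.exp (2 * Real.pi * I / N) with hζ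
  have hprim : IsPrimitiveRoot ζ N := Complex.isPrimitiveRoot_exp N hN0
  have hζabs : ‖ζ‖ = 1 := by
    have hform : (2 * (Real.pi : ℂ) * I / N) = ((2 * Real.pi / N : ℝ) : ℂ) * I := by
      push_cast; ring
    rw [hζ, hform, Complex.norm_exp_ofReal_mul_I]
  have hζ0 : ζ ≠ 0 := Complex.exp_ne_zero _
  set w1 := Real.sqrt t.1 with hw1
  set w2 := Real.sqrt t.2 with hw2
  have hw1n : 0 ≤ w1 := Real.sqrt_nonneg _
  have hw2n : 0 ≤ w2 := Real.sqrt_nonneg _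
  have hw1sq : w1 ^ 2 = t.1 := Real.sq_sqrt ht1
  have hw2sq : w2 ^ 2 = t.2 := Real.sq_sqrt ht2
  set zz : ℕ → ℕ → ℂ × ℂ := fun a b => (ζ ^ a * (w1 : ℂ), ζ ^ b * (w2 : ℂ)) with hzz
  have hzball : ∀ a b : ℕ,
      ‖(zz a b).1‖ ^ 2 + ‖(zz a b).2‖ ^ 2 ≤ 1 := by
    intro a b
    have e1 : ‖(zz a b).1‖ = w1 := by
      simp [hzz, map_mul, map_pow, hζabs, Complex.norm_real, Real.norm_eq_abs,
        _root_.abs_of_nonneg hw1n]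
    have e2 : ‖(zz a b).2‖ = w2 := by
      simp [hzz, map_mul, map_pow, hζabs, Complex.norm_real, Real.norm_eq_abs,
        _root_.abs_of_nonneg hw2n]
    rw [e1, e2, hw1sq, hw2sq]
    exact hts
  set f : ℂ × ℂ → ℂ := fun z =>
    z.1 ^ k1 * (starRingEnd ℂ z.1) ^ l1 * z.2 ^ k2 * (starRingEnd ℂ z.2) ^ l2
      - MvPolynomial.eval ![z.1, starRingEnd ℂ z.1, z.2, starRingEnd ℂ z.2] P with hf
  have hfle : ∀ a b : ℕ, ‖f (zz a b)‖ ≤ r := fun a b =>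
    le_ballSupDev k1 l1 k2 l2 P (hzball a b)
  set m1 : (Fin 4 →₀ ℕ) → ℤ := fun d => (d 0 : ℤ) - (d 1 : ℤ) - (p : ℤ) with hm1
  set m2 : (Fin 4 →₀ ℕ) → ℤ := fun d => (d 2 : ℤ) - (d 3 : ℤ) - (q : ℤ) with hm2
  set S : ℂ := ∑ a ∈ Finset.range N, ∑ b ∈ Finset.range N,
      ζ ^ (-((a : ℤ) * (p : ℤ) + (b : ℤ) * (q : ℤ))) * f (zz a b) with hS
  -- bound on |S|
  have habs_S : ‖S‖ ≤ (N : ℝ) ^ 2 * r := by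
    rw [hS]
    refine le_trans (norm_sum_le _ _) ?_
    have hrow : ∀ a ∈ Finset.range N,
        ‖∑ b ∈ Finset.range N,
          ζ ^ (-((a : ℤ) * (p : ℤ) + (b : ℤ) * (q : ℤ))) * f (zz a b)‖ ≤ (N : ℝ) * r := by
      intro a _
      refine le_trans (norm_sum_le _ _) ?_
      have hterm : ∀ b ∈ Finset.range N,
          ‖ζ ^ (-((a : ℤ) * (p : ℤ) + (b : ℤ) * (q : ℤ))) * f (zz a b)‖ ≤ r := by
        intro b _
        rw [norm_mul, norm_zpow, hζabs, one_zpow, one_mul]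
        exact hfle a b
      calc _ ≤ ∑ _b ∈ Finset.range N, r := Finset.sum_le_sum hterm
        _ = (N : ℝ) * r := by rw [Finset.sum_const, Finset.card_range, nsmul_eq_mul]
    calc _ ≤ ∑ _a ∈ Finset.range N, (N : ℝ) * r := Finset.sum_le_sum hrow
      _ = (N : ℝ) * ((N : ℝ) * r) := by rw [Finset.sum_const, Finset.card_range, nsmul_eq_mul]
      _ = (N : ℝ) ^ 2 * r := by ring
  -- rotation formulas
  have hMrot : ∀ a b : ℕ,
      (zz a b).1 ^ k1 * (starRingEnd ℂ (zz a b).1) ^ l1 * (zz a b).2 ^ k2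
          * (starRingEnd ℂ (zz a b).2) ^ l2
        = ζ ^ ((a : ℤ) * (p : ℤ) + (b : ℤ) * (q : ℤ))
            * ((w1 ^ (k1 + l1) * w2 ^ (k2 + l2) : ℝ) : ℂ) := by
    intro a b
    have e1 := rot_pow hζabs w1 a k1 l1
    have e2 := rot_pow hζabs w2 b k2 l2
    have hcast1 : (k1 : ℤ) - (l1 : ℤ) = (p : ℤ) := by omega
    have hcast2 : (k2 : ℤ) - (l2 : ℤ) = (q : ℤ) := by omega
    calc (zz a b).1 ^ k1 * (starRingEnd ℂ (zz a b).1) ^ l1 * (zz a b).2 ^ k2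
          * (starRingEnd ℂ (zz a b).2) ^ l2
        = ((ζ ^ a * (w1 : ℂ)) ^ k1 * (starRingEnd ℂ (ζ ^ a * (w1 : ℂ))) ^ l1)
          * ((ζ ^ b * (w2 : ℂ)) ^ k2 * (starRingEnd ℂ (ζ ^ b * (w2 : ℂ))) ^ l2) := by
          rw [hzz]; ring
      _ = (ζ ^ ((a : ℤ) * ((k1 : ℤ) - (l1 : ℤ))) * ((w1 ^ (k1 + l1) : ℝ) : ℂ))
          * (ζ ^ ((b : ℤ) * ((k2 : ℤ) - (l2 : ℤ))) * ((w2 ^ (k2 + l2) : ℝ) : ℂ)) := by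
          rw [e1, e2]
      _ = (ζ ^ ((a : ℤ) * (p : ℤ)) * ζ ^ ((b : ℤ) * (q : ℤ)))
          * (((w1 ^ (k1 + l1) : ℝ) : ℂ) * ((w2 ^ (k2 + l2) : ℝ) : ℂ)) := by
          rw [hcast1, hcast2]; ring
      _ = _ := by rw [zpow_add₀ hζ0]; push_cast; ring
  have hErot : ∀ a b : ℕ,
      MvPolynomial.eval ![(zz a b).1, starRingEnd ℂ (zz a b).1, (zz a b).2,
          starRingEnd ℂ (zz a b).2] P
        = ∑ d ∈ P.support, P.coeff d
            * (ζ ^ ((a : ℤ) * ((d 0 : ℤ) - (d 1 : ℤ)) + (b : ℤ) * ((d 2 : ℤ) - (d 3 : ℤ)))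
              * ((w1 ^ (d 0 + d 1) * w2 ^ (d 2 + d 3) : ℝ) : ℂ)) := by
    intro a b
    rw [eval4]
    refine Finset.sum_congr rfl fun d _ => ?_
    congr 1
    have hv0 : (![(zz a b).1, starRingEnd ℂ (zz a b).1, (zz a b).2,
        starRingEnd ℂ (zz a b).2] : Fin 4 → ℂ) 0 = ζ ^ a * (w1 : ℂ) := rfl
    have hv1 : (![(zz a b).1, starRingEnd ℂ (zz a b).1, (zz a b).2,
        starRingEnd ℂ (zz a b).2] : Fin 4 → ℂ) 1 = starRingEnd ℂ (ζ ^ a * (w1 : ℂ)) := rfl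
    have hv2 : (![(zz a b).1, starRingEnd ℂ (zz a b).1, (zz a b).2,
        starRingEnd ℂ (zz a b).2] : Fin 4 → ℂ) 2 = ζ ^ b * (w2 : ℂ) := rfl
    have hv3 : (![(zz a b).1, starRingEnd ℂ (zz a b).1, (zz a b).2,
        starRingEnd ℂ (zz a b).2] : Fin 4 → ℂ) 3 = starRingEnd ℂ (ζ ^ b * (w2 : ℂ)) := rfl
    rw [hv0, hv1, hv2, hv3]
    calc (ζ ^ a * (w1 : ℂ)) ^ d 0 * (starRingEnd ℂ (ζ ^ a * (w1 : ℂ))) ^ d 1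
          * (ζ ^ b * (w2 : ℂ)) ^ d 2 * (starRingEnd ℂ (ζ ^ b * (w2 : ℂ))) ^ d 3
        = ((ζ ^ a * (w1 : ℂ)) ^ d 0 * (starRingEnd ℂ (ζ ^ a * (w1 : ℂ))) ^ d 1)
          * ((ζ ^ b * (w2 : ℂ)) ^ d 2 * (starRingEnd ℂ (ζ ^ b * (w2 : ℂ))) ^ d 3) := by ring
      _ = (ζ ^ ((a : ℤ) * ((d 0 : ℤ) - (d 1 : ℤ))) * ((w1 ^ (d 0 + d 1) : ℝ) : ℂ))
          * (ζ ^ ((b : ℤ) * ((d 2 : ℤ) - (d 3 : ℤ))) * ((w2 ^ (d 2 + d 3) : ℝ) : ℂ)) := by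
          rw [rot_pow hζabs w1 a (d 0) (d 1), rot_pow hζabs w2 b (d 2) (d 3)]
      _ = _ := by rw [zpow_add₀ hζ0]; push_cast; ring
  have hfval : ∀ a b : ℕ, f (zz a b)
      = (zz a b).1 ^ k1 * (starRingEnd ℂ (zz a b).1) ^ l1 * (zz a b).2 ^ k2
          * (starRingEnd ℂ (zz a b).2) ^ l2
        - MvPolynomial.eval ![(zz a b).1, starRingEnd ℂ (zz a b).1, (zz a b).2,
            starRingEnd ℂ (zz a b).2] P := fun a b => rfl
  have hsplit : S = (∑ a ∈ Finset.range N, ∑ b ∈ Finset.range N,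
        ζ ^ (-((a : ℤ) * (p : ℤ) + (b : ℤ) * (q : ℤ)))
          * (ζ ^ ((a : ℤ) * (p : ℤ) + (b : ℤ) * (q : ℤ))
            * ((w1 ^ (k1 + l1) * w2 ^ (k2 + l2) : ℝ) : ℂ)))
      - ∑ a ∈ Finset.range N, ∑ b ∈ Finset.range N,
          ζ ^ (-((a : ℤ) * (p : ℤ) + (b : ℤ) * (q : ℤ)))
            * MvPolynomial.eval ![(zz a b).1, starRingEnd ℂ (zz a b).1, (zz a b).2,
                starRingEnd ℂ (zz a b).2] P := by
    rw [hS, ← Finset.sum_sub_distrib]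
    refine Finset.sum_congr rfl fun a _ => ?_
    rw [← Finset.sum_sub_distrib]
    refine Finset.sum_congr rfl fun b _ => ?_
    rw [← mul_sub]
    congr 1
    rw [hfval a b, hMrot a b]
  have hpart1 : (∑ a ∈ Finset.range N, ∑ b ∈ Finset.range N,
        ζ ^ (-((a : ℤ) * (p : ℤ) + (b : ℤ) * (q : ℤ)))
          * (ζ ^ ((a : ℤ) * (p : ℤ) + (b : ℤ) * (q : ℤ))
            * ((w1 ^ (k1 + l1) * w2 ^ (k2 + l2) : ℝ) : ℂ)))
      = (N : ℂ) ^ 2 * ((w1 ^ (k1 + l1) * w2 ^ (k2 + l2) : ℝ) : ℂ) := by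
    have hterm : ∀ a ∈ Finset.range N, ∀ b ∈ Finset.range N,
        ζ ^ (-((a : ℤ) * (p : ℤ) + (b : ℤ) * (q : ℤ)))
            * (ζ ^ ((a : ℤ) * (p : ℤ) + (b : ℤ) * (q : ℤ))
              * ((w1 ^ (k1 + l1) * w2 ^ (k2 + l2) : ℝ) : ℂ))
          = ((w1 ^ (k1 + l1) * w2 ^ (k2 + l2) : ℝ) : ℂ) :=
      fun a _ b _ => zpow_cancel hζ0 (by ring) _
    calc _ = ∑ _a ∈ Finset.range N, ∑ _b ∈ Finset.range N,
          ((w1 ^ (k1 + l1) * w2 ^ (k2 + l2) : ℝ) : ℂ) :=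
            Finset.sum_congr rfl fun a ha => Finset.sum_congr rfl fun b hb => hterm a ha b hb
      _ = _ := by
            simp only [Finset.sum_const, Finset.card_range, nsmul_eq_mul]
            ring
  have hpart2 : (∑ a ∈ Finset.range N, ∑ b ∈ Finset.range N,
        ζ ^ (-((a : ℤ) * (p : ℤ) + (b : ℤ) * (q : ℤ)))
          * MvPolynomial.eval ![(zz a b).1, starRingEnd ℂ (zz a b).1, (zz a b).2,
              starRingEnd ℂ (zz a b).2] P)
      = ∑ d ∈ P.support, P.coeff d * ((w1 ^ (d 0 + d 1) * w2 ^ (d 2 + d 3) : ℝ) : ℂ)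
          * ((∑ a ∈ Finset.range N, ζ ^ ((a : ℤ) * m1 d))
            * (∑ b ∈ Finset.range N, ζ ^ ((b : ℤ) * m2 d))) := by
    calc _ = ∑ a ∈ Finset.range N, ∑ b ∈ Finset.range N, ∑ d ∈ P.support,
          P.coeff d * ((w1 ^ (d 0 + d 1) * w2 ^ (d 2 + d 3) : ℝ) : ℂ)
            * ζ ^ ((a : ℤ) * m1 d + (b : ℤ) * m2 d) := by
            refine Finset.sum_congr rfl fun a _ => Finset.sum_congr rfl fun b _ => ?_
            rw [hErot a b, Finset.mul_sum]
            refine Finset.sum_congr rfl fun d _ => ?_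
            exact zpow_collect hζ0 (by simp only [hm1, hm2]; ring) _ _
      _ = ∑ a ∈ Finset.range N, ∑ d ∈ P.support, ∑ b ∈ Finset.range N,
          P.coeff d * ((w1 ^ (d 0 + d 1) * w2 ^ (d 2 + d 3) : ℝ) : ℂ)
            * ζ ^ ((a : ℤ) * m1 d + (b : ℤ) * m2 d) :=
            Finset.sum_congr rfl fun a _ => Finset.sum_comm
      _ = ∑ d ∈ P.support, ∑ a ∈ Finset.range N, ∑ b ∈ Finset.range N,
          P.coeff d * ((w1 ^ (d 0 + d 1) * w2 ^ (d 2 + d 3) : ℝ) : ℂ)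
            * ζ ^ ((a : ℤ) * m1 d + (b : ℤ) * m2 d) := Finset.sum_comm
      _ = _ := by
            refine Finset.sum_congr rfl fun d _ => ?_
            rw [Finset.sum_mul_sum, Finset.mul_sum]
            refine Finset.sum_congr rfl fun a _ => ?_
            rw [Finset.mul_sum]
            refine Finset.sum_congr rfl fun b _ => ?_
            rw [← zpow_add₀ hζ0]
  have hroot : ∀ d ∈ P.support,
      (∑ a ∈ Finset.range N, ζ ^ ((a : ℤ) * m1 d))
          * (∑ b ∈ Finset.range N, ζ ^ ((b : ℤ) * m2 d))
        = if d 0 = d 1 + p ∧ d 2 = d 3 + q then ((N : ℂ) * (N : ℂ)) else 0 := by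
    intro d hd
    have hdeg := hsupdeg d hd
    have hb1 : (m1 d).natAbs < N := by simp only [hm1]; omega
    have hb2 : (m2 d).natAbs < N := by simp only [hm2]; omega
    rw [rootSum hprim _ hb1, rootSum hprim _ hb2]
    by_cases hc : d 0 = d 1 + p ∧ d 2 = d 3 + q
    · have hz1 : m1 d = 0 := by simp only [hm1]; omega
      have hz2 : m2 d = 0 := by simp only [hm2]; omega
      rw [if_pos hz1, if_pos hz2, if_pos hc]
    · rw [if_neg hc]
      by_cases hz1 : m1 d = 0
      · have hz2 : m2 d ≠ 0 := by
          simp only [hm1] at hz1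
          simp only [hm2]
          omega
        rw [if_pos hz1, if_neg hz2, mul_zero]
      · rw [if_neg hz1, zero_mul]
  have hpart2' : (∑ a ∈ Finset.range N, ∑ b ∈ Finset.range N,
        ζ ^ (-((a : ℤ) * (p : ℤ) + (b : ℤ) * (q : ℤ)))
          * MvPolynomial.eval ![(zz a b).1, starRingEnd ℂ (zz a b).1, (zz a b).2,
              starRingEnd ℂ (zz a b).2] P)
      = ∑ d ∈ T, P.coeff d * ((w1 ^ (d 0 + d 1) * w2 ^ (d 2 + d 3) : ℝ) : ℂ)
          * ((N : ℂ) * (N : ℂ)) := by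
    rw [hpart2, Finset.sum_congr rfl (fun d hd => by rw [hroot d hd])]
    calc (∑ d ∈ P.support, P.coeff d * ((w1 ^ (d 0 + d 1) * w2 ^ (d 2 + d 3) : ℝ) : ℂ)
          * (if d 0 = d 1 + p ∧ d 2 = d 3 + q then ((N : ℂ) * (N : ℂ)) else 0))
        = ∑ d ∈ P.support, (if d 0 = d 1 + p ∧ d 2 = d 3 + q then
            P.coeff d * ((w1 ^ (d 0 + d 1) * w2 ^ (d 2 + d 3) : ℝ) : ℂ)
              * ((N : ℂ) * (N : ℂ)) else 0) := by
            refine Finset.sum_congr rfl fun d _ => ?_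
            rw [mul_ite, mul_zero]
      _ = _ := by rw [hT, Finset.sum_filter]
  have hwd : ∀ d ∈ T, ((w1 ^ (d 0 + d 1) * w2 ^ (d 2 + d 3) : ℝ) : ℂ)
      = ((w1 ^ p * w2 ^ q : ℝ) : ℂ) * ((t.1 ^ (d 1) * t.2 ^ (d 3) : ℝ) : ℂ) := by
    intro d hd
    obtain ⟨_, hd0, hd2, _⟩ := hTd d hd
    have e1 : w1 ^ (d 0 + d 1) = w1 ^ p * t.1 ^ (d 1) := by
      rw [← hw1sq, ← pow_mul, ← pow_add, hd0]
      congr 1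
      ring
    have e2 : w2 ^ (d 2 + d 3) = w2 ^ q * t.2 ^ (d 3) := by
      rw [← hw2sq, ← pow_mul, ← pow_add, hd2]
      congr 1
      ring
    rw [e1, e2]
    push_cast
    ring
  set W : ℝ := w1 ^ p * w2 ^ q with hW
  set E : ℂ := ((t.1 ^ l1 * t.2 ^ l2 : ℝ) : ℂ)
      - ∑ d ∈ T, P.coeff d * ((t.1 ^ (d 1) * t.2 ^ (d 3) : ℝ) : ℂ) with hE
  have hMw : ((w1 ^ (k1 + l1) * w2 ^ (k2 + l2) : ℝ) : ℂ)
      = ((W : ℝ) : ℂ) * ((t.1 ^ l1 * t.2 ^ l2 : ℝ) : ℂ) := by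
    have e1 : w1 ^ (k1 + l1) = w1 ^ p * t.1 ^ l1 := by
      rw [← hw1sq, ← pow_mul, ← pow_add, ← hp']
      congr 1
      ring
    have e2 : w2 ^ (k2 + l2) = w2 ^ q * t.2 ^ l2 := by
      rw [← hw2sq, ← pow_mul, ← pow_add, ← hq']
      congr 1
      ring
    rw [hW, e1, e2]
    push_cast
    ring
  have hS_eq : S = (N : ℂ) ^ 2 * ((W : ℝ) : ℂ) * E := by
    rw [hsplit, hpart1, hpart2', hMw,
      Finset.sum_congr rfl (fun d hd => by rw [hwd d hd]), hE, mul_sub]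
    congr 1
    · ring
    · rw [Finset.mul_sum]
      refine Finset.sum_congr rfl fun d _ => ?_
      rw [hW]
      push_cast
      ring
  have hWn : (0 : ℝ) ≤ W := by rw [hW]; positivity
  have hEb : W * ‖E‖ ≤ r := by
    have habs2 : ‖S‖ = (N : ℝ) ^ 2 * (W * ‖E‖) := by
      rw [hS_eq, norm_mul, norm_mul, norm_pow, Complex.norm_natCast, Complex.norm_real, Real.norm_eq_abs,
        _root_.abs_of_nonneg hWn]
      ring
    have hNpos : (0 : ℝ) < (N : ℝ) ^ 2 := by
      have : (0 : ℝ) < (N : ℝ) := by exact_mod_cast Nat.pos_of_ne_zero hN0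
      positivity
    have hle := habs_S
    rw [habs2] at hle
    exact le_of_mul_le_mul_left hle hNpos
  have hQev : MvPolynomial.eval ![t.1, t.2] Q
      = t.1 ^ l1 * t.2 ^ l2 - ∑ d ∈ T, (P.coeff d).re * (t.1 ^ (d 1) * t.2 ^ (d 3)) := by
    rw [hQ, map_sub, eval_monomial, prod2, map_sum]
    simp only [Matrix.cons_val_zero, Matrix.cons_val_one, Matrix.head_cons, one_mul]
    congr 1
    refine Finset.sum_congr rfl fun d _ => ?_
    rw [eval_monomial, prod2]
    simp only [Matrix.cons_val_zero, Matrix.cons_val_one, Matrix.head_cons]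
  have hre : E.re = MvPolynomial.eval ![t.1, t.2] Q := by
    rw [hE, Complex.sub_re, Complex.ofReal_re, Complex.re_sum, hQev]
    congr 1
    refine Finset.sum_congr rfl fun d _ => ?_
    rw [mul_comm (P.coeff d), Complex.re_ofReal_mul, mul_comm]
  have hWeq : t.1 ^ (((k1 : ℝ) - l1) / 2) * t.2 ^ (((k2 : ℝ) - l2) / 2) = W := by
    have hc1 : ((k1 : ℝ) - l1) / 2 = ((p : ℕ) : ℝ) / 2 := by
      rw [hpdef]; push_cast [Nat.cast_sub h1]; ring
    have hc2 : ((k2 : ℝ) - l2) / 2 = ((q : ℕ) : ℝ) / 2 := by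
      rw [hqdef]; push_cast [Nat.cast_sub h2]; ring
    rw [hc1, hc2, weight_eq ht1, weight_eq ht2, hW, hw1, hw2]
  show t.1 ^ (((k1 : ℝ) - l1) / 2) * t.2 ^ (((k2 : ℝ) - l2) / 2)
      * |MvPolynomial.eval ![t.1, t.2] Q| ≤ r
  rw [hWeq, ← hre]
  calc W * |E.re| ≤ W * ‖E‖ :=
        mul_le_mul_of_nonneg_left (Complex.abs_re_le_norm E) hWn
    _ ≤ r := hEb

end LeastDevAux

/-- for `k₁ ≥ l₁ ≥ 0`, `k₂ ≥ l₂ ≥ 0` with `n = k₁+l₁+k₂+l₂ ≥ 1`, and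
`α = (k₁-l₁)/2`, `β = (k₂-l₂)/2`, the complex two-dimensional problem reduces to the weighted
problem on the triangle: `L(k₁,l₁,k₂,l₂) = D_{l₁,l₂}(α,β)`. -/
theorem least_deviation_eq_triangle_deviation (k1 l1 k2 l2 : ℕ)
    (h1 : l1 ≤ k1) (h2 : l2 ≤ k2) (hn : 1 ≤ k1 + l1 + k2 + l2) :
    devL k1 l1 k2 l2 = devD l1 l2 (((k1 : ℝ) - l1) / 2) (((k2 : ℝ) - l2) / 2) := by
  have ha : (0 : ℝ) ≤ ((k1 : ℝ) - l1) / 2 :=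
    div_nonneg (sub_nonneg.mpr (by exact_mod_cast h1)) (by norm_num)
  have hb : (0 : ℝ) ≤ ((k2 : ℝ) - l2) / 2 :=
    div_nonneg (sub_nonneg.mpr (by exact_mod_cast h2)) (by norm_num)
  apply le_antisymm
  · refine le_csInf ?_ ?_
    · refine ⟨triangleSup (((k1 : ℝ) - l1) / 2) (((k2 : ℝ) - l2) / 2)
        (MvPolynomial.monomial (LeastDevAux.sp l1 l2) 1),
        MvPolynomial.monomial (LeastDevAux.sp l1 l2) 1, ⟨?_, ?_⟩, rfl⟩
      · simp [LeastDevAux.sp, MvPolynomial.coeff_monomial]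
      · intro d hd hne
        exfalso
        apply hne
        simpa [LeastDevAux.sp, MvPolynomial.support_monomial] using hd
    · rintro r ⟨Q, hQ, rfl⟩
      obtain ⟨P, hdeg, heq⟩ := LeastDevAux.dirA k1 l1 k2 l2 h1 h2 Q hQ
      refine csInf_le ⟨0, ?_⟩ ⟨P, hdeg, heq.symm⟩
      rintro x ⟨P', _, rfl⟩
      exact LeastDevAux.ballSupDev_nonneg k1 l1 k2 l2 P'
  · refine le_csInf ⟨ballSupDev k1 l1 k2 l2 0, 0, by simp, rfl⟩ ?_
    rintro r ⟨P, hdeg, rfl⟩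
    obtain ⟨Q, hQ, hle⟩ := LeastDevAux.dirB k1 l1 k2 l2 h1 h2 hn P hdeg
    refine le_trans (csInf_le ⟨0, ?_⟩ ⟨Q, hQ, rfl⟩) hle
    rintro x ⟨Q', _, rfl⟩
    exact LeastDevAux.triangleSup_nonneg _ _ ha hb Q'
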